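/- arXiv:1811.05764 — 5 statements merged into one kernel-verified Lean document; each statement's English description precedes it below -/
import Mathlib

section
/- Let η : (0,∞) × (-1,1)³ → ℝ be defined by η(t,x) = λ / (λ G + 1/√t + Σ_{i=1}^{3} (1/(1+xᵢ) + 1/(1-xᵢ))) with λ ∈ (0, 1/5] and G ≥ 0. Then pointwise on (0,∞) × (-1,1)³ one has 2η(∂ₜη - Δη) + 4|∇η|² ≤ 25λ² ≤ 1, i.e. (∂ₜ - Δ)η/η + 2|∇η|²/η² ≤ 1/(2η²). -/
open MeasureTheory Finset Set

noncomputable section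

/-- Space-time `ℝ × ℝ³`. -/
abbrev SpTime := ℝ × (Fin 3 → ℝ)

/-- The parabolic metric `d((t,x),(s,y)) = max(√|t-s|, |x-y|_∞)`. -/
def pd (z w : SpTime) : ℝ := max (Real.sqrt |z.1 - w.1|) ‖z.2 - w.2‖

/-- Parabolic ball of radius `R` centred at `z`. -/
def pball (z : SpTime) (R : ℝ) : Set SpTime := {w | pd z w < R}

/-- Partial derivative in time. -/
def pderivT (f : SpTime → ℝ) (z : SpTime) : ℝ := deriv (fun s => f (s, z.2)) z.1

/-- Partial derivative in the `i`-th spatial direction. -/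
def pderivX (f : SpTime → ℝ) (i : Fin 3) (z : SpTime) : ℝ :=
  deriv (fun s => f (z.1, Function.update z.2 i s)) (z.2 i)

/-- Second partial derivative in the `i`-th spatial direction. -/
def pderivXX (f : SpTime → ℝ) (i : Fin 3) (z : SpTime) : ℝ :=
  deriv (fun s => pderivX f i (z.1, Function.update z.2 i s)) (z.2 i)

/-- Spatial Laplacian. -/
def plap (f : SpTime → ℝ) (z : SpTime) : ℝ := ∑ i, pderivXX f i z

/-- The heat operator `∂ₜ - Δ`. -/
def heatOp (f : SpTime → ℝ) (z : SpTime) : ℝ := pderivT f z - plap f z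

/-- Parabolic rescaling of a kernel: `Φ_T(t,x) = T⁻⁵ Φ(t/T², x/T)`. -/
def scaleK (Φ : SpTime → ℝ) (T : ℝ) (z : SpTime) : ℝ :=
  (T ^ 5)⁻¹ * Φ (z.1 / T ^ 2, fun i => z.2 i / T)

/-- Space-time convolution. -/
def convK (f g : SpTime → ℝ) (z : SpTime) : ℝ := ∫ w, f (z - w) * g w

/-- `PsiAux Φ T n = Ψ_{T,n+1} = Φ_{T/2} * ⋯ * Φ_{T 2^{-(n+1)}}`. -/
def PsiAux (Φ : SpTime → ℝ) (T : ℝ) : ℕ → SpTime → ℝ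
  | 0 => scaleK Φ (T / 2)
  | n + 1 => convK (PsiAux Φ T n) (scaleK Φ (T / 2 ^ (n + 2)))

/-- `Ψ_{T,n} = Φ_{T 2^{-1}} * ⋯ * Φ_{T 2^{-n}}` (for `n ≥ 1`). -/
def PsiN (Φ : SpTime → ℝ) (T : ℝ) (n : ℕ) : SpTime → ℝ := PsiAux Φ T (n - 1)

/-- Backward parabolic ball. -/
def pballB (z : SpTime) (R : ℝ) : Set SpTime := {w | pd z w < R ∧ w.1 < z.1}

/-- Parabolic boundary of a domain. -/
def pBoundary (D : Set SpTime) : Set SpTime :=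
  {z | z ∈ closure D ∧ ∀ r, 0 < r → ¬ pballB z r ⊆ closure D}

/-- `D_d`: the points of `D` at parabolic distance at least `d` from the parabolic boundary. -/
def shrink (D : Set SpTime) (d : ℝ) : Set SpTime := {z ∈ D | ∀ w ∈ pBoundary D, d ≤ pd z w}

/-- The parabolic box `P_R = (R²,1) × {|x|_∞ < 1-R}`. -/
def PRset (R : ℝ) : Set SpTime := Set.Ioo (R ^ 2) 1 ×ˢ {x : Fin 3 → ℝ | ‖x‖ < 1 - R}
/-- The denominator function. -/
def Dfun (lam G : ℝ) (z : SpTime) : ℝ :=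
  lam * G + 1 / Real.sqrt z.1 + ∑ i : Fin 3, (1 / (1 + z.2 i) + 1 / (1 - z.2 i))

lemma hasDerivAt_pair (s : ℝ) (hs : |s| < 1) :
    HasDerivAt (fun u : ℝ => 1 / (1 + u) + 1 / (1 - u))
      (-(1 / (1 + s) ^ 2) + 1 / (1 - s) ^ 2) s := by
  rw [abs_lt] at hs
  have h1 : (1 : ℝ) + s ≠ 0 := by nlinarith
  have h2 : (1 : ℝ) - s ≠ 0 := by nlinarith
  have A : HasDerivAt (fun u : ℝ => 1 + u) 1 s := (hasDerivAt_id s).const_add 1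
  have B : HasDerivAt (fun u : ℝ => 1 - u) (-1) s := (hasDerivAt_id s).const_sub 1
  have A' := A.inv h1
  have B' := B.inv h2
  have C : HasDerivAt (fun u : ℝ => (1 + u)⁻¹ + (1 - u)⁻¹) _ s := A'.add B'
  convert C using 2 <;> simp [one_div] <;> ring

lemma hasDerivAt_coordSum (x : Fin 3 → ℝ) (i : Fin 3) (s : ℝ) (hs : |s| < 1) :
    HasDerivAt (fun u => ∑ j : Fin 3,
        (1 / (1 + Function.update x i u j) + 1 / (1 - Function.update x i u j)))
      (-(1 / (1 + s) ^ 2) + 1 / (1 - s) ^ 2) s := by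
  have hfe : (fun u => ∑ j : Fin 3,
        (1 / (1 + Function.update x i u j) + 1 / (1 - Function.update x i u j)))
      = fun u => (1 / (1 + u) + 1 / (1 - u)) +
          ∑ j ∈ Finset.univ.erase i, (1 / (1 + x j) + 1 / (1 - x j)) := by
    funext u
    rw [← Finset.add_sum_erase _ _ (Finset.mem_univ i), Function.update_self]
    congr 1
    refine Finset.sum_congr rfl fun j hj => ?_
    rw [Function.update_of_ne (Finset.ne_of_mem_erase hj)]
  rw [hfe]
  exact (hasDerivAt_pair s hs).add_const _

lemma hasDerivAt_D_x (lam G t : ℝ) (x : Fin 3 → ℝ) (i : Fin 3) (s : ℝ) (hs : |s| < 1) :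
    HasDerivAt (fun u => Dfun lam G (t, Function.update x i u))
      (-(1 / (1 + s) ^ 2) + 1 / (1 - s) ^ 2) s := by
  have he : (fun u => Dfun lam G (t, Function.update x i u)) = fun u =>
      lam * G + 1 / Real.sqrt t + ∑ j : Fin 3,
        (1 / (1 + Function.update x i u j) + 1 / (1 - Function.update x i u j)) := rfl
  rw [he]
  exact (hasDerivAt_coordSum x i s hs).const_add _

lemma hasDerivAt_D_t (lam G t : ℝ) (ht : 0 < t) (x : Fin 3 → ℝ) :
    HasDerivAt (fun s => Dfun lam G (s, x))
      (-(1 / (2 * Real.sqrt t ^ 3))) t := by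
  have hst : 0 < Real.sqrt t := Real.sqrt_pos.mpr ht
  have h : HasDerivAt (fun s : ℝ => (Real.sqrt s)⁻¹) _ t :=
    (Real.hasDerivAt_sqrt (ne_of_gt ht)).inv (ne_of_gt hst)
  have h2 : HasDerivAt (fun s : ℝ => 1 / Real.sqrt s) (-(1 / (2 * Real.sqrt t ^ 3))) t := by
    simp only [one_div]
    convert h using 1
    field_simp
  have he : (fun s => Dfun lam G (s, x)) = fun s =>
      lam * G + 1 / Real.sqrt s + ∑ i : Fin 3, (1 / (1 + x i) + 1 / (1 - x i)) := rfl
  rw [he]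
  exact (h2.const_add (lam * G)).add_const _

lemma Dfun_pos (lam G : ℝ) (hlam : 0 < lam) (hG : 0 ≤ G) (z : SpTime)
    (ht : 0 < z.1) (hx : ∀ i, |z.2 i| < 1) : 0 < Dfun lam G z := by
  have h1 : 0 < 1 / Real.sqrt z.1 := by positivity
  have h2 : (0:ℝ) ≤ ∑ i : Fin 3, (1 / (1 + z.2 i) + 1 / (1 - z.2 i)) := by
    refine Finset.sum_nonneg fun i _ => ?_
    have := abs_lt.mp (hx i)
    have : (0:ℝ) < 1 + z.2 i := by linarith [(abs_lt.mp (hx i)).1]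
    have : (0:ℝ) < 1 - z.2 i := by linarith [(abs_lt.mp (hx i)).2]
    positivity
  have h3 : 0 ≤ lam * G := mul_nonneg hlam.le hG
  unfold Dfun; linarith
lemma pderivT_eq (lam G : ℝ) (η : SpTime → ℝ)
    (hη : ∀ z : SpTime, η z = lam / Dfun lam G z) (z : SpTime) (ht : 0 < z.1)
    (hD : Dfun lam G z ≠ 0) :
    pderivT η z = lam * (1 / (2 * Real.sqrt z.1 ^ 3)) / (Dfun lam G z) ^ 2 := by
  have hfe : (fun s => η (s, z.2)) = fun s => lam / Dfun lam G (s, z.2) := by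
    funext s; exact hη _
  have hD' : Dfun lam G (z.1, z.2) ≠ 0 := by simpa using hD
  have h := (hasDerivAt_const z.1 lam).div (hasDerivAt_D_t lam G z.1 ht z.2) hD'
  unfold pderivT
  rw [hfe, (show HasDerivAt (fun s => lam / Dfun lam G (s, z.2)) _ z.1 from h).deriv]
  have : Dfun lam G (z.1, z.2) = Dfun lam G z := by simp
  rw [this]; ring

lemma pderivX_eq (lam G : ℝ) (η : SpTime → ℝ)
    (hη : ∀ z : SpTime, η z = lam / Dfun lam G z) (w : SpTime) (i : Fin 3)
    (hw : ∀ j, |w.2 j| < 1) (hD : Dfun lam G w ≠ 0) :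
    pderivX η i w = lam * (1 / (1 + w.2 i) ^ 2 - 1 / (1 - w.2 i) ^ 2) / (Dfun lam G w) ^ 2 := by
  have hfe : (fun s => η (w.1, Function.update w.2 i s))
      = fun s => lam / Dfun lam G (w.1, Function.update w.2 i s) := by
    funext s; exact hη _
  have hD' : Dfun lam G (w.1, Function.update w.2 i (w.2 i)) ≠ 0 := by
    rw [Function.update_eq_self]
    simpa using hD
  have h := (hasDerivAt_const (w.2 i) lam).div
    (hasDerivAt_D_x lam G w.1 w.2 i (w.2 i) (hw i)) hD'
  unfold pderivX
  rw [hfe, (show HasDerivAt (fun s => lam / Dfun lam G (w.1, Function.update w.2 i s)) _ (w.2 i)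
    from h).deriv, Function.update_eq_self]
  have : Dfun lam G (w.1, w.2) = Dfun lam G w := by simp
  rw [this]; ring
lemma pderivXX_eq (lam G : ℝ) (hlam : 0 < lam) (hG : 0 ≤ G) (η : SpTime → ℝ)
    (hη : ∀ z : SpTime, η z = lam / Dfun lam G z) (z : SpTime) (i : Fin 3)
    (ht : 0 < z.1) (hx : ∀ j, |z.2 j| < 1) :
    pderivXX η i z = -lam * (2 / (1 + z.2 i) ^ 3 + 2 / (1 - z.2 i) ^ 3) / (Dfun lam G z) ^ 2
      + 2 * lam * (1 / (1 + z.2 i) ^ 2 - 1 / (1 - z.2 i) ^ 2) ^ 2 / (Dfun lam G z) ^ 3 := by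
  have hx0 := abs_lt.mp (hx i)
  set s0 := z.2 i with hs0
  have hmem : Set.Ioo (-1 : ℝ) 1 ∈ nhds s0 := Ioo_mem_nhds hx0.1 hx0.2
  have hev : (fun s => pderivX η i (z.1, Function.update z.2 i s)) =ᶠ[nhds s0]
      (fun s => lam * (1 / (1 + s) ^ 2 - 1 / (1 - s) ^ 2) /
        (Dfun lam G (z.1, Function.update z.2 i s)) ^ 2) := by
    filter_upwards [hmem] with s hs
    have hw : ∀ j, |(Function.update z.2 i s) j| < 1 := by
      intro j
      rcases eq_or_ne j i with rfl | h
      · rw [Function.update_self]; exact abs_lt.mpr ⟨hs.1, hs.2⟩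
      · rw [Function.update_of_ne h]; exact hx j
    have hD := (Dfun_pos lam G hlam hG (z.1, Function.update z.2 i s) ht hw).ne'
    have := pderivX_eq lam G η hη (z.1, Function.update z.2 i s) i hw hD
    simpa [Function.update_self] using this
  unfold pderivXX
  rw [hev.deriv_eq]
  -- derivative of the explicit formula
  have h1 : (1 : ℝ) + s0 ≠ 0 := by nlinarith [hx0.1]
  have h2 : (1 : ℝ) - s0 ≠ 0 := by nlinarith [hx0.2]
  have hDz : (0:ℝ) < Dfun lam G z := Dfun_pos lam G hlam hG z ht hx
  have hg0 : Dfun lam G (z.1, Function.update z.2 i s0) ≠ 0 := by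
    rw [hs0, Function.update_eq_self]
    simpa using hDz.ne'
  have A : HasDerivAt (fun u : ℝ => 1 + u) 1 s0 := (hasDerivAt_id s0).const_add 1
  have B : HasDerivAt (fun u : ℝ => 1 - u) (-1) s0 := (hasDerivAt_id s0).const_sub 1
  have Ai := (A.pow 2).inv (pow_ne_zero 2 h1)
  have Bi := (B.pow 2).inv (pow_ne_zero 2 h2)
  have hN : HasDerivAt (fun s : ℝ => lam * (1 / (1 + s) ^ 2 - 1 / (1 - s) ^ 2))
      (lam * (-(2 * (1 + s0)) / ((1 + s0) ^ 2) ^ 2 - -(2 * (1 - s0) * (-1)) / ((1 - s0) ^ 2) ^ 2))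
      s0 := by
    have : HasDerivAt (fun s : ℝ => lam * (((1 + s) ^ 2)⁻¹ - ((1 - s) ^ 2)⁻¹)) _ s0 :=
      (Ai.sub Bi).const_mul lam
    convert this using 2 <;> simp [one_div] <;> ring
  have hg : HasDerivAt (fun u => Dfun lam G (z.1, Function.update z.2 i u) ^ 2) _ s0 :=
    (hasDerivAt_D_x lam G z.1 z.2 i s0 (hx i)).pow 2
  have hfull := hN.div hg (pow_ne_zero 2 hg0)
  rw [(show HasDerivAt (fun s => lam * (1 / (1 + s) ^ 2 - 1 / (1 - s) ^ 2) /
    Dfun lam G (z.1, Function.update z.2 i s) ^ 2) _ s0 from hfull).deriv]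
  have hcol : Dfun lam G (z.1, Function.update z.2 i s0) = Dfun lam G z := by
    rw [hs0, Function.update_eq_self]
  rw [hcol]
  push_cast
  field_simp
  ring
lemma term_alg (lam p q D : ℝ) (hp : p ≠ 0) (hq : q ≠ 0) (hD : D ≠ 0) :
    2 * (lam / D) * -(-lam * (2 / p ^ 3 + 2 / q ^ 3) / D ^ 2
        + 2 * lam * (1 / p ^ 2 - 1 / q ^ 2) ^ 2 / D ^ 3)
      + 4 * (lam * (1 / p ^ 2 - 1 / q ^ 2) / D ^ 2) ^ 2
    = lam ^ 2 * (4 / p ^ 3 + 4 / q ^ 3) / D ^ 3 := by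
  field_simp
  ring

lemma time_alg (lam st D : ℝ) (hst : st ≠ 0) (hD : D ≠ 0) :
    2 * (lam / D) * (lam * (1 / (2 * st ^ 3)) / D ^ 2) = lam ^ 2 * (1 / st ^ 3) / D ^ 3 := by
  field_simp

lemma cube_le (u S : ℝ) (hu : 0 < u) (huS : u ≤ S) : u ^ 3 ≤ u * S ^ 2 := by
  have h2 : u ^ 2 ≤ S ^ 2 := pow_le_pow_left₀ hu.le huS 2
  calc u ^ 3 = u * u ^ 2 := by ring
    _ ≤ u * S ^ 2 := mul_le_mul_of_nonneg_left h2 hu.le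

lemma sq25 (lam : ℝ) (h0 : 0 < lam) (h : lam ≤ 1/5) : 25 * lam ^ 2 ≤ 1 := by nlinarith


lemma key_core (a b1 b2 b3 b4 b5 b6 lamG S : ℝ) (ha : 0 < a) (h1 : 0 < b1) (h2 : 0 < b2)
    (h3 : 0 < b3) (h4 : 0 < b4) (h5 : 0 < b5) (h6 : 0 < b6) (hlamG : 0 ≤ lamG)
    (hS : S = a + (b1 + b2 + (b3 + b4) + (b5 + b6))) :
    a ^ 3 + (4 * b1 ^ 3 + 4 * b2 ^ 3 + 4 * b3 ^ 3 + 4 * b4 ^ 3 + 4 * b5 ^ 3 + 4 * b6 ^ 3)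
      ≤ 25 * (lamG + S) ^ 3 := by
  have hS0 : 0 < S := by rw [hS]; linarith
  have e1 := cube_le a S ha (by linarith [hS.ge])
  have e2 := cube_le b1 S h1 (by rw [hS]; linarith)
  have e3 := cube_le b2 S h2 (by rw [hS]; linarith)
  have e4 := cube_le b3 S h3 (by rw [hS]; linarith)
  have e5 := cube_le b4 S h4 (by rw [hS]; linarith)
  have e6 := cube_le b5 S h5 (by rw [hS]; linarith)
  have e7 := cube_le b6 S h6 (by rw [hS]; linarith)
  have hSD3 : S ^ 3 ≤ (lamG + S) ^ 3 := pow_le_pow_left₀ hS0.le (by linarith) 3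
  have hS3 : S ^ 3 = a * S ^ 2 + (b1 * S ^ 2 + b2 * S ^ 2 + b3 * S ^ 2 + b4 * S ^ 2
      + b5 * S ^ 2 + b6 * S ^ 2) := by rw [hS]; ring
  have g1 : (0:ℝ) ≤ a * S ^ 2 := by positivity
  have g2 : (0:ℝ) ≤ b1 * S ^ 2 := by positivity
  have g3 : (0:ℝ) ≤ b2 * S ^ 2 := by positivity
  have g4 : (0:ℝ) ≤ b3 * S ^ 2 := by positivity
  have g5 : (0:ℝ) ≤ b4 * S ^ 2 := by positivity
  have g6 : (0:ℝ) ≤ b5 * S ^ 2 := by positivity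
  have g7 : (0:ℝ) ≤ b6 * S ^ 2 := by positivity
  linarith

lemma key_bound (st p0 p1 p2 q0 q1 q2 lamG : ℝ) (hst : 0 < st) (hp0 : 0 < p0)
    (hp1 : 0 < p1) (hp2 : 0 < p2) (hq0 : 0 < q0) (hq1 : 0 < q1) (hq2 : 0 < q2)
    (hlamG : 0 ≤ lamG) :
    1 / st ^ 3 + (4 / p0 ^ 3 + 4 / q0 ^ 3 + 4 / p1 ^ 3 + 4 / q1 ^ 3 + 4 / p2 ^ 3 + 4 / q2 ^ 3)
      ≤ 25 * (lamG + 1 / st + (1 / p0 + 1 / q0 + (1 / p1 + 1 / q1) + (1 / p2 + 1 / q2))) ^ 3 := by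
  have ha : 0 < 1 / st := by positivity
  have hb0 : 0 < 1 / p0 := by positivity
  have hb1 : 0 < 1 / p1 := by positivity
  have hb2 : 0 < 1 / p2 := by positivity
  have hc0 : 0 < 1 / q0 := by positivity
  have hc1 : 0 < 1 / q1 := by positivity
  have hc2 : 0 < 1 / q2 := by positivity
  have key := key_core (1/st) (1/p0) (1/q0) (1/p1) (1/q1) (1/p2) (1/q2) lamG
    (1 / st + (1 / p0 + 1 / q0 + (1 / p1 + 1 / q1) + (1 / p2 + 1 / q2)))
    ha hb0 hc0 hb1 hc1 hb2 hc2 hlamG rfl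
  have r1 : 1 / st ^ 3 = (1/st) ^ 3 := by rw [one_div, one_div, inv_pow]
  have r2 : ∀ u : ℝ, 4 / u ^ 3 = 4 * (1/u) ^ 3 := fun u => by
    rw [one_div, inv_pow]; ring
  have hcol : lamG + 1 / st + (1 / p0 + 1 / q0 + (1 / p1 + 1 / q1) + (1 / p2 + 1 / q2))
      = lamG + (1 / st + (1 / p0 + 1 / q0 + (1 / p1 + 1 / q1) + (1 / p2 + 1 / q2))) := by ring
  rw [r1, r2 p0, r2 q0, r2 p1, r2 q1, r2 p2, r2 q2, hcol]
  linarith only [key]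

set_option maxHeartbeats 2000000 in
/-- the weight `η` satisfies the differential inequality
`2η(∂ₜη - Δη) + 4|∇η|² ≤ 25λ² ≤ 1` for `0 < λ ≤ 1/5`. -/
theorem stmt_1 (lam G : ℝ) (hlam : 0 < lam) (hlam' : lam ≤ 1/5) (hG : 0 ≤ G)
    (η : SpTime → ℝ)
    (hη : ∀ z : SpTime, η z = lam / (lam * G + 1 / Real.sqrt z.1 +
      ∑ i : Fin 3, (1 / (1 + z.2 i) + 1 / (1 - z.2 i))))
    (z : SpTime) (ht : 0 < z.1) (hx : ∀ i, |z.2 i| < 1) :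
    (2 * η z * (pderivT η z - plap η z) + 4 * ∑ i, (pderivX η i z) ^ 2 ≤ 25 * lam ^ 2) ∧
    (25 * lam ^ 2 ≤ 1) ∧
    ((pderivT η z - plap η z) / η z + 2 * (∑ i, (pderivX η i z) ^ 2) / (η z) ^ 2
      ≤ 1 / (2 * (η z) ^ 2)) := by
  have hηD : ∀ w : SpTime, η w = lam / Dfun lam G w := by
    intro w; unfold Dfun; exact hη w
  have hD : 0 < Dfun lam G z := Dfun_pos lam G hlam hG z ht hx
  have hst : 0 < Real.sqrt z.1 := Real.sqrt_pos.mpr ht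
  have hp : ∀ i : Fin 3, 0 < 1 + z.2 i := fun i => by linarith [(abs_lt.mp (hx i)).1]
  have hq : ∀ i : Fin 3, 0 < 1 - z.2 i := fun i => by linarith [(abs_lt.mp (hx i)).2]
  have hT := pderivT_eq lam G η hηD z ht hD.ne'
  have hX0 := pderivX_eq lam G η hηD z 0 hx hD.ne'
  have hX1 := pderivX_eq lam G η hηD z 1 hx hD.ne'
  have hX2 := pderivX_eq lam G η hηD z 2 hx hD.ne'
  have hXX0 := pderivXX_eq lam G hlam hG η hηD z 0 ht hx
  have hXX1 := pderivXX_eq lam G hlam hG η hηD z 1 ht hx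
  have hXX2 := pderivXX_eq lam G hlam hG η hηD z 2 ht hx
  have hplap : plap η z = pderivXX η 0 z + pderivXX η 1 z + pderivXX η 2 z := by
    unfold plap; rw [Fin.sum_univ_three]
  have hsumX : ∑ i, (pderivX η i z) ^ 2
      = (pderivX η 0 z) ^ 2 + (pderivX η 1 z) ^ 2 + (pderivX η 2 z) ^ 2 :=
    Fin.sum_univ_three _
  have hEz : η z = lam / Dfun lam G z := hηD z
  set D := Dfun lam G z with hDdef
  set st := Real.sqrt z.1 with hstdef
  set p0 := 1 + z.2 0 with hp0def
  set p1 := 1 + z.2 1 with hp1def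
  set p2 := 1 + z.2 2 with hp2def
  set q0 := 1 - z.2 0 with hq0def
  set q1 := 1 - z.2 1 with hq1def
  set q2 := 1 - z.2 2 with hq2def
  have hp0 := hp 0; have hp1 := hp 1; have hp2 := hp 2
  have hq0 := hq 0; have hq1 := hq 1; have hq2 := hq 2
  have hDval : D = lam * G + 1 / st + (1 / p0 + 1 / q0 + (1 / p1 + 1 / q1) + (1 / p2 + 1 / q2)) := by
    rw [hDdef]; unfold Dfun; rw [Fin.sum_univ_three]
  -- the key algebraic identity
  have key1 : 2 * η z * (pderivT η z - plap η z) + 4 * ∑ i, (pderivX η i z) ^ 2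
      = lam ^ 2 * (1 / st ^ 3 + (4 / p0 ^ 3 + 4 / q0 ^ 3 + 4 / p1 ^ 3 + 4 / q1 ^ 3
          + 4 / p2 ^ 3 + 4 / q2 ^ 3)) / D ^ 3 := by
    have split : 2 * η z * (pderivT η z - plap η z) + 4 * ∑ i, (pderivX η i z) ^ 2
        = 2 * (η z) * pderivT η z
          + ((2 * (η z) * -(pderivXX η 0 z) + 4 * (pderivX η 0 z) ^ 2)
            + (2 * (η z) * -(pderivXX η 1 z) + 4 * (pderivX η 1 z) ^ 2)
            + (2 * (η z) * -(pderivXX η 2 z) + 4 * (pderivX η 2 z) ^ 2)) := by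
      rw [hplap, hsumX]; ring
    rw [split, hEz, hT, hX0, hX1, hX2, hXX0, hXX1, hXX2,
      time_alg lam st D hst.ne' hD.ne',
      term_alg lam p0 q0 D hp0.ne' hq0.ne' hD.ne',
      term_alg lam p1 q1 D hp1.ne' hq1.ne' hD.ne',
      term_alg lam p2 q2 D hp2.ne' hq2.ne' hD.ne']
    ring
  -- the key bound
  have key2 : 1 / st ^ 3 + (4 / p0 ^ 3 + 4 / q0 ^ 3 + 4 / p1 ^ 3 + 4 / q1 ^ 3
      + 4 / p2 ^ 3 + 4 / q2 ^ 3) ≤ 25 * D ^ 3 := by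
    rw [hDval]
    exact key_bound st p0 p1 p2 q0 q1 q2 (lam * G) hst hp0 hp1 hp2 hq0 hq1 hq2
      (mul_nonneg hlam.le hG)
  have hD3 : (0:ℝ) < D ^ 3 := by positivity
  have part1 : 2 * η z * (pderivT η z - plap η z) + 4 * ∑ i, (pderivX η i z) ^ 2
      ≤ 25 * lam ^ 2 := by
    rw [key1, div_le_iff₀ hD3]
    have h := mul_le_mul_of_nonneg_left key2 (by positivity : (0:ℝ) ≤ lam ^ 2)
    have h2 : lam ^ 2 * (25 * D ^ 3) = 25 * lam ^ 2 * D ^ 3 := by ring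
    linarith only [h, h2]
  have part2 : 25 * lam ^ 2 ≤ 1 := sq25 lam hlam hlam'
  refine ⟨part1, part2, ?_⟩
  have hη0 : 0 < η z := by rw [hEz]; positivity
  have heq : (pderivT η z - plap η z) / η z + 2 * (∑ i, (pderivX η i z) ^ 2) / (η z) ^ 2
      = (2 * η z * (pderivT η z - plap η z) + 4 * ∑ i, (pderivX η i z) ^ 2) / (2 * (η z) ^ 2) := by
    field_simp
    ring
  rw [heq]
  have h1 : 2 * η z * (pderivT η z - plap η z) + 4 * ∑ i, (pderivX η i z) ^ 2 ≤ 1 :=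
    le_trans part1 part2
  exact (div_le_div_iff_of_pos_right (by positivity : (0:ℝ) < 2 * (η z) ^ 2)).mpr h1
end
end

section
/- Let u, η be functions with u continuous on [0,1]×[-1,1]³ and η continuous, C² and strictly positive on the interior, vanishing on the boundary, and satisfying (∂ₜ-Δ)η/η + 2|∇η|²/η² ≤ 1/(2η²) pointwise on the interior. Suppose (∂ₜ-Δ)u = -u³ + g pointwise on (0,1]×(-1,1)³ with |g| ≤ G. If uη attains a positive maximum at an interior point z₀ (or at a point with t=1), then at z₀ one has u² ≤ η⁻²/2 + G/u, and consequently u(z₀)η(z₀) ≤ max{1, 2η(z₀)³ G}. -/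
open MeasureTheory Finset Set

noncomputable section

open Topology Filter in
lemma hasDerivAt_curveX (w : SpTime) (i : Fin 3) (s : ℝ) :
    HasDerivAt (fun s => ((w.1, Function.update w.2 i s) : SpTime))
      ((0, Pi.single i 1) : SpTime) s := by
  apply HasDerivAt.prodMk (hasDerivAt_const s w.1)
  rw [hasDerivAt_pi]
  intro j
  rcases eq_or_ne j i with rfl | hj
  · simpa using hasDerivAt_id' s
  · simp only [Function.update_of_ne hj, Pi.single_eq_of_ne hj]
    exact hasDerivAt_const s (w.2 j)

lemma curveX_base (w : SpTime) (i : Fin 3) :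
    ((w.1, Function.update w.2 i (w.2 i)) : SpTime) = w := by
  simp [Function.update_eq_self]

lemma keyX (f : SpTime → ℝ) (w : SpTime) (i : Fin 3) (hf : DifferentiableAt ℝ f w) :
    HasDerivAt (fun s => f (w.1, Function.update w.2 i s))
      (fderiv ℝ f w ((0, Pi.single i 1) : SpTime)) (w.2 i) :=
  hf.hasFDerivAt.comp_hasDerivAt_of_eq (w.2 i) (hasDerivAt_curveX w i (w.2 i))
    (curveX_base w i).symm

lemma pderivX_eq_s3 (f : SpTime → ℝ) (w : SpTime) (i : Fin 3) (hf : DifferentiableAt ℝ f w) :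
    pderivX f i w = fderiv ℝ f w ((0, Pi.single i 1) : SpTime) :=
  (keyX f w i hf).deriv

lemma keyX' (f : SpTime → ℝ) (w : SpTime) (i : Fin 3) (hf : DifferentiableAt ℝ f w) :
    HasDerivAt (fun s => f (w.1, Function.update w.2 i s)) (pderivX f i w) (w.2 i) := by
  rw [pderivX_eq_s3 f w i hf]; exact keyX f w i hf

lemma keyT (f : SpTime → ℝ) (w : SpTime) (hf : DifferentiableAt ℝ f w) :
    HasDerivAt (fun s => f (s, w.2)) (pderivT f w) w.1 := by
  have hc : HasDerivAt (fun s => ((s, w.2) : SpTime)) ((1, 0) : SpTime) w.1 :=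
    (hasDerivAt_id w.1).prodMk (hasDerivAt_const w.1 w.2)
  have h := hf.hasFDerivAt.comp_hasDerivAt_of_eq w.1 hc rfl
  have hd : pderivT f w = fderiv ℝ f w ((1, 0) : SpTime) := h.deriv
  rw [hd]; exact h

open Topology Filter in
lemma curveX_tendsto (z : SpTime) (i : Fin 3) :
    Filter.Tendsto (fun s => ((z.1, Function.update z.2 i s) : SpTime)) (𝓝 (z.2 i)) (𝓝 z) := by
  have h := (hasDerivAt_curveX z i (z.2 i)).continuousAt.tendsto
  rwa [curveX_base] at h

open Topology Filter in
lemma eventually_diff (f : SpTime → ℝ) (z : SpTime) (hf : ContDiffAt ℝ 2 f z) :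
    ∀ᶠ w in 𝓝 z, DifferentiableAt ℝ f w := by
  filter_upwards [hf.eventually (by norm_num)] with w hw
  exact hw.differentiableAt (by norm_num)

open Topology Filter in
lemma keyXX (f : SpTime → ℝ) (z : SpTime) (i : Fin 3) (hf : ContDiffAt ℝ 2 f z) :
    HasDerivAt (fun s => pderivX f i (z.1, Function.update z.2 i s)) (pderivXX f i z) (z.2 i) := by
  set v : SpTime := ((0, Pi.single i 1) : SpTime) with hv
  have hfd : DifferentiableAt ℝ (fun w => fderiv ℝ f w v) z :=
    ((hf.fderiv_right (m := 1) (by norm_num)).differentiableAt (by norm_num)).clm_apply (differentiableAt_const v)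
  have h1 : HasDerivAt (fun s => fderiv ℝ f ((z.1, Function.update z.2 i s) : SpTime) v)
      (fderiv ℝ (fun w => fderiv ℝ f w v) z v) (z.2 i) :=
    hfd.hasFDerivAt.comp_hasDerivAt_of_eq (z.2 i) (hasDerivAt_curveX z i (z.2 i))
      (curveX_base z i).symm
  have hee : (fun s => pderivX f i ((z.1, Function.update z.2 i s) : SpTime))
      =ᶠ[𝓝 (z.2 i)] (fun s => fderiv ℝ f ((z.1, Function.update z.2 i s) : SpTime) v) := by
    filter_upwards [(curveX_tendsto z i).eventually (eventually_diff f z hf)] with s hs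
    exact pderivX_eq_s3 f _ i hs
  have h3 := h1.congr_of_eventuallyEq hee
  have hval : pderivXX f i z = fderiv ℝ (fun w => fderiv ℝ f w v) z v := h3.deriv
  rw [hval]; exact h3

lemma pderivT_mul (u η : SpTime → ℝ) (w : SpTime) (hu : DifferentiableAt ℝ u w)
    (hη : DifferentiableAt ℝ η w) :
    pderivT (fun z => u z * η z) w = pderivT u w * η w + u w * pderivT η w :=
  ((keyT u w hu).mul (keyT η w hη)).deriv

lemma pderivX_mul (u η : SpTime → ℝ) (w : SpTime) (i : Fin 3) (hu : DifferentiableAt ℝ u w)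
    (hη : DifferentiableAt ℝ η w) :
    pderivX (fun z => u z * η z) i w = pderivX u i w * η w + u w * pderivX η i w := by
  have h := ((keyX' u w i hu).mul (keyX' η w i hη)).deriv
  rw [curveX_base] at h
  exact h

open Topology Filter in
lemma pderivXX_mul (u η : SpTime → ℝ) (z : SpTime) (i : Fin 3)
    (hu : ContDiffAt ℝ 2 u z) (hη : ContDiffAt ℝ 2 η z) :
    pderivXX (fun w => u w * η w) i z =
      pderivXX u i z * η z + 2 * (pderivX u i z * pderivX η i z) + u z * pderivXX η i z := by
  have hud : DifferentiableAt ℝ u z := hu.differentiableAt (by norm_num)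
  have hηd : DifferentiableAt ℝ η z := hη.differentiableAt (by norm_num)
  have hcomb := ((keyXX u z i hu).mul (keyX' η z i hηd)).add
    ((keyX' u z i hud).mul (keyXX η z i hη))
  have hee : (fun s => pderivX (fun w => u w * η w) i ((z.1, Function.update z.2 i s) : SpTime))
      =ᶠ[𝓝 (z.2 i)]
      (fun s => pderivX u i ((z.1, Function.update z.2 i s) : SpTime)
          * η ((z.1, Function.update z.2 i s) : SpTime)
        + u ((z.1, Function.update z.2 i s) : SpTime)
          * pderivX η i ((z.1, Function.update z.2 i s) : SpTime)) := by
    filter_upwards [(curveX_tendsto z i).eventually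
      ((eventually_diff u z hu).and (eventually_diff η z hη))] with s hs
    exact pderivX_mul u η _ i hs.1 hs.2
  have h3 := hcomb.congr_of_eventuallyEq hee
  have hval := h3.deriv
  rw [curveX_base] at hval
  calc pderivXX (fun w => u w * η w) i z
      = pderivXX u i z * η z + pderivX u i z * pderivX η i z
        + (pderivX u i z * pderivX η i z + u z * pderivXX η i z) := hval
    _ = _ := by ring

set_option maxHeartbeats 1000000


/-- at a positive maximum of `uη` one has `u² ≤ η⁻²/2 + G/u`, hence
`uη ≤ max{1, 2η³G}`. -/
theorem stmt_3 (u η g : SpTime → ℝ) (G : ℝ) (z₀ : SpTime)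
    (hG : 0 ≤ G)
    (hu2 : ContDiffAt ℝ 2 u z₀) (hη2 : ContDiffAt ℝ 2 η z₀)
    (hη_pos : 0 < η z₀)
    (hηineq : heatOp η z₀ / η z₀ + 2 * (∑ i, (pderivX η i z₀) ^ 2) / (η z₀) ^ 2
        ≤ 1 / (2 * (η z₀) ^ 2))
    (hpde : heatOp u z₀ = -(u z₀) ^ 3 + g z₀)
    (hg : |g z₀| ≤ G)
    (hgrad : ∀ i, pderivX (fun z => u z * η z) i z₀ = 0)
    (hlap : plap (fun z => u z * η z) z₀ ≤ 0)
    (htime : 0 ≤ pderivT (fun z => u z * η z) z₀)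
    (hpos : 0 < u z₀ * η z₀) :
    (u z₀) ^ 2 ≤ 1 / (2 * (η z₀) ^ 2) + G / u z₀ ∧
      u z₀ * η z₀ ≤ max 1 (2 * (η z₀) ^ 3 * G) := by
  have hud : DifferentiableAt ℝ u z₀ := hu2.differentiableAt (by norm_num)
  have hηd : DifferentiableAt ℝ η z₀ := hη2.differentiableAt (by norm_num)
  set A := u z₀ with hA'
  set B := η z₀ with hB'
  have hB : 0 < B := hη_pos
  have hA : 0 < A := by nlinarith
  set S := ∑ i, (pderivX η i z₀) ^ 2 with hS'
  have hSnn : 0 ≤ S := Finset.sum_nonneg fun i _ => sq_nonneg _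
  set Hη := heatOp η z₀ with hHη'
  have hT : pderivT (fun z => u z * η z) z₀ = pderivT u z₀ * B + A * pderivT η z₀ :=
    pderivT_mul u η z₀ hud hηd
  have hgi : ∀ i, pderivX u i z₀ * B = -(A * pderivX η i z₀) := by
    intro i
    have h := hgrad i
    rw [pderivX_mul u η z₀ i hud hηd] at h
    linarith
  set Su := ∑ i, pderivX u i z₀ * pderivX η i z₀ with hSu'
  have hSu : Su * B = -(A * S) := by
    rw [hSu', hS', Finset.sum_mul, Finset.mul_sum, ← Finset.sum_neg_distrib]
    refine Finset.sum_congr rfl fun i _ => ?_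
    linear_combination (pderivX η i z₀) * hgi i
  have hL : plap (fun z => u z * η z) z₀ = plap u z₀ * B + 2 * Su + A * plap η z₀ := by
    unfold plap
    rw [Finset.sum_congr rfl (fun i _ => pderivXX_mul u η z₀ i hu2 hη2),
      Finset.sum_add_distrib, Finset.sum_add_distrib, ← Finset.sum_mul, ← Finset.mul_sum,
      ← Finset.mul_sum, hSu']
  have h0 : 0 ≤ heatOp u z₀ * B + A * Hη - 2 * Su := by
    unfold heatOp
    unfold heatOp at hHη'
    nlinarith [htime, hlap, hT, hL]
  have hgg : g z₀ ≤ G := (abs_le.mp hg).2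
  have h1 : 0 ≤ (-A ^ 3 + g z₀) * B ^ 2 + A * Hη * B + 2 * (A * S) := by
    nlinarith [mul_le_mul_of_nonneg_right h0 hB.le, hSu, hpde]
  have hη' : 2 * Hη * B + 4 * S ≤ 1 := by
    have h2 := mul_le_mul_of_nonneg_left hηineq (by positivity : (0:ℝ) ≤ 2 * B ^ 2)
    have e1 : 2 * B ^ 2 * (Hη / B + 2 * S / B ^ 2) = 2 * Hη * B + 4 * S := by
      field_simp; ring
    have e2 : 2 * B ^ 2 * (1 / (2 * B ^ 2)) = 1 := by field_simp
    rw [e1, e2] at h2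
    exact h2
  have key : 2 * B ^ 2 * A ^ 3 ≤ A + 2 * B ^ 2 * G := by
    nlinarith [h1, mul_le_mul_of_nonneg_left hη' hA.le,
      mul_le_mul_of_nonneg_right hgg (sq_nonneg B)]
  constructor
  · rw [div_add_div _ _ (by positivity) hA.ne', le_div_iff₀ (by positivity)]
    nlinarith [key]
  · by_contra hcon
    push_neg at hcon
    rw [max_lt_iff] at hcon
    have h3 : 2 * (A * B) ^ 3 < 2 * (A * B) := by
      nlinarith [mul_le_mul_of_nonneg_right key hB.le, hcon.2]
    have h4 : A * B < (A * B) ^ 2 := by nlinarith [hcon.1, mul_pos hA hB]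
    nlinarith [hcon.1, h3, h4, mul_pos hA hB]
end
end

section
/- Cubic commutator estimate: let v be a continuous function with local parabolic Hölder seminorm [v]_{α,B(z,T)} < ∞ for some α ∈ (0,1), and let (·)_T denote convolution with the kernel Ψ_T supported in B(0,T) with ∫Ψ_T = 1 satisfying the scaling bound. Then for every point z, |(v_T(z))³ - (v³)_T(z)| ≤ 6 ‖v‖²_{B(z,T)} T^α [v]_{α,B(z,T)}. -/
open MeasureTheory Finset Set

noncomputable section

instance : (volume : Measure SpTime).IsAddLeftInvariant :=
  inferInstanceAs (((volume : Measure ℝ).prod volume).IsAddLeftInvariant)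

instance : (volume : Measure SpTime).IsAddHaarMeasure :=
  inferInstanceAs (((volume : Measure ℝ).prod volume).IsAddHaarMeasure)

lemma pd_nonneg (z w : SpTime) : 0 ≤ pd z w :=
  le_trans (Real.sqrt_nonneg _) (le_max_left _ _)

lemma pd_symm (z w : SpTime) : pd z w = pd w z := by
  unfold pd
  rw [abs_sub_comm, norm_sub_rev]

lemma pd_zero_sub (z w : SpTime) : pd 0 (z - w) = pd z w := by
  unfold pd
  simp [Prod.fst_sub, Prod.snd_sub, abs_sub_comm, norm_sub_rev]

lemma sqrt_add_le_aux {a b : ℝ} (ha : 0 ≤ a) (hb : 0 ≤ b) :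
    Real.sqrt (a + b) ≤ Real.sqrt a + Real.sqrt b := by
  rw [show a + b = Real.sqrt a ^ 2 + Real.sqrt b ^ 2 by
    rw [Real.sq_sqrt ha, Real.sq_sqrt hb]]
  calc Real.sqrt (Real.sqrt a ^ 2 + Real.sqrt b ^ 2)
      ≤ Real.sqrt ((Real.sqrt a + Real.sqrt b) ^ 2) := by
        apply Real.sqrt_le_sqrt; nlinarith [Real.sqrt_nonneg a, Real.sqrt_nonneg b]
    _ = Real.sqrt a + Real.sqrt b := Real.sqrt_sq (by positivity)

lemma pd_triangle (a b c : SpTime) : pd a c ≤ pd a b + pd b c := by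
  unfold pd
  apply max_le
  · calc Real.sqrt |a.1 - c.1| ≤ Real.sqrt (|a.1 - b.1| + |b.1 - c.1|) :=
        Real.sqrt_le_sqrt (abs_sub_le _ _ _)
      _ ≤ Real.sqrt |a.1 - b.1| + Real.sqrt |b.1 - c.1| :=
        sqrt_add_le_aux (abs_nonneg _) (abs_nonneg _)
      _ ≤ _ := add_le_add (le_max_left _ _) (le_max_left _ _)
  · calc ‖a.2 - c.2‖ ≤ ‖a.2 - b.2‖ + ‖b.2 - c.2‖ := norm_sub_le_norm_sub_add_norm_sub _ _ _
      _ ≤ _ := add_le_add (le_max_right _ _) (le_max_right _ _)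

/-- cubic commutator estimate `|(v_T)³ - (v³)_T| ≤ 6‖v‖² T^α [v]_α`. -/
theorem stmt_9 (Ψ v : SpTime → ℝ) (T α K M : ℝ)
    (hT : 0 < T) (hα : α ∈ Set.Ioo (0:ℝ) 1) (hK : 0 ≤ K) (hM : 0 ≤ M)
    (hv : Continuous v)
    (hΨ0 : ∀ z, 0 ≤ Ψ z)
    (hsupp : ∀ z, Ψ z ≠ 0 → pd 0 z < T)
    (hint : ∫ z, Ψ z = 1)
    (hscale : ∀ x : SpTime, ∫ y, Ψ (x - y) * pd x y ^ α ≤ T ^ α)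
    (z : SpTime)
    (hHol : ∀ w ∈ pball z T, ∀ w' ∈ pball z T, |v w - v w'| ≤ K * pd w w' ^ α)
    (hbd : ∀ w ∈ pball z T, |v w| ≤ M)
    (hI1 : Integrable (fun w => Ψ (z - w) * v w))
    (hI3 : Integrable (fun w => Ψ (z - w) * (v w) ^ 3)) :
    |(∫ w, Ψ (z - w) * v w) ^ 3 - ∫ w, Ψ (z - w) * (v w) ^ 3|
      ≤ 6 * M ^ 2 * T ^ α * K := by
  obtain ⟨hα0, hα1⟩ := hα
  set c := ∫ w, Ψ (z - w) * v w with hc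
  have hΨint : Integrable Ψ := by
    by_contra h
    rw [integral_undef h] at hint; norm_num at hint
  have hΨz : Integrable (fun w => Ψ (z - w)) := hΨint.comp_sub_left z
  have hΨ1 : ∫ w, Ψ (z - w) = 1 := by
    rw [integral_sub_left_eq_self Ψ volume z]; exact hint
  have hTα : (0:ℝ) < T ^ α := Real.rpow_pos_of_pos hT α
  have hmem : ∀ w, Ψ (z - w) ≠ 0 → w ∈ pball z T := by
    intro w hw
    have := hsupp (z - w) hw
    rwa [pd_zero_sub] at this
  have hcM : |c| ≤ M := by
    have h1 : ‖∫ w, Ψ (z - w) * v w‖ ≤ ∫ w, Ψ (z - w) * M := by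
      apply norm_integral_le_of_norm_le (hΨz.mul_const M)
      filter_upwards with w
      rcases eq_or_ne (Ψ (z - w)) 0 with h0 | h0
      · simp [h0]
      · rw [Real.norm_eq_abs, abs_mul, abs_of_nonneg (hΨ0 _)]
        exact mul_le_mul_of_nonneg_left (hbd w (hmem w h0)) (hΨ0 _)
    rw [integral_mul_const, hΨ1, one_mul] at h1
    rw [← Real.norm_eq_abs]
    exact h1
  have hkey : ∀ w, Ψ (z - w) ≠ 0 → |c - v w| ≤ 2 * K * T ^ α := by
    intro w hw
    have hwmem := hmem w hw
    have h1 : c - v w = ∫ w', Ψ (z - w') * (v w' - v w) := by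
      rw [show (fun w' => Ψ (z - w') * (v w' - v w))
            = fun w' => Ψ (z - w') * v w' - Ψ (z - w') * v w from
          funext fun w' => mul_sub _ _ _]
      rw [integral_sub hI1 (hΨz.mul_const (v w)), integral_mul_const, hΨ1, one_mul, hc]
    have h2 : ‖∫ w', Ψ (z - w') * (v w' - v w)‖ ≤ ∫ w', Ψ (z - w') * (2 * K * T ^ α) := by
      apply norm_integral_le_of_norm_le (hΨz.mul_const _)
      filter_upwards with w'
      rcases eq_or_ne (Ψ (z - w')) 0 with h0 | h0
      · simp [h0]
      · rw [Real.norm_eq_abs, abs_mul, abs_of_nonneg (hΨ0 _)]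
        apply mul_le_mul_of_nonneg_left _ (hΨ0 _)
        have hw'mem := hmem w' h0
        refine (hHol w' hw'mem w hwmem).trans ?_
        have hpd : pd w' w ≤ 2 * T := by
          calc pd w' w ≤ pd w' z + pd z w := pd_triangle _ _ _
            _ ≤ T + T := add_le_add (by rw [pd_symm]; exact le_of_lt hw'mem) (le_of_lt hwmem)
            _ = 2 * T := by ring
        have h2a : pd w' w ^ α ≤ (2 * T) ^ α :=
          Real.rpow_le_rpow (pd_nonneg _ _) hpd hα0.le
        have h2T : (2 * T) ^ α ≤ 2 * T ^ α := by
          rw [Real.mul_rpow (by norm_num) hT.le]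
          apply mul_le_mul_of_nonneg_right _ (le_of_lt hTα)
          calc (2:ℝ) ^ α ≤ (2:ℝ) ^ (1:ℝ) :=
              Real.rpow_le_rpow_of_exponent_le one_le_two hα1.le
            _ = 2 := Real.rpow_one 2
        calc K * pd w' w ^ α ≤ K * (2 * T ^ α) :=
              mul_le_mul_of_nonneg_left (h2a.trans h2T) hK
          _ = 2 * K * T ^ α := by ring
    rw [integral_mul_const, hΨ1, one_mul] at h2
    rw [h1, ← Real.norm_eq_abs]
    exact h2
  have hmain : c ^ 3 - (∫ w, Ψ (z - w) * v w ^ 3)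
      = ∫ w, Ψ (z - w) * (c ^ 3 - v w ^ 3) := by
    rw [show (fun w => Ψ (z - w) * (c ^ 3 - v w ^ 3))
          = fun w => Ψ (z - w) * c ^ 3 - Ψ (z - w) * v w ^ 3 from
        funext fun w => mul_sub _ _ _]
    rw [integral_sub (hΨz.mul_const _) hI3, integral_mul_const, hΨ1, one_mul]
  have hfin : ‖∫ w, Ψ (z - w) * (c ^ 3 - v w ^ 3)‖
      ≤ ∫ w, Ψ (z - w) * (6 * M ^ 2 * T ^ α * K) := by
    apply norm_integral_le_of_norm_le (hΨz.mul_const _)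
    filter_upwards with w
    rcases eq_or_ne (Ψ (z - w)) 0 with h0 | h0
    · simp [h0]
    · rw [Real.norm_eq_abs, abs_mul, abs_of_nonneg (hΨ0 _)]
      apply mul_le_mul_of_nonneg_left _ (hΨ0 _)
      have hb := hbd w (hmem w h0)
      have hd := hkey w h0
      have factor : c ^ 3 - v w ^ 3 = (c - v w) * (c ^ 2 + c * v w + v w ^ 2) := by ring
      rw [factor, abs_mul]
      have h3M : |c ^ 2 + c * v w + v w ^ 2| ≤ 3 * M ^ 2 := by
        have t1 : |c ^ 2 + c * v w + v w ^ 2| ≤ |c ^ 2| + |c * v w| + |v w ^ 2| :=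
          (abs_add_le _ _).trans (add_le_add_left (abs_add_le _ _) _)
        rw [abs_mul, abs_pow, abs_pow] at t1
        nlinarith [abs_nonneg c, abs_nonneg (v w)]
      calc |c - v w| * |c ^ 2 + c * v w + v w ^ 2| ≤ (2 * K * T ^ α) * (3 * M ^ 2) :=
            mul_le_mul hd h3M (abs_nonneg _) (by positivity)
        _ = 6 * M ^ 2 * T ^ α * K := by ring
  rw [integral_mul_const, hΨ1, one_mul] at hfin
  rw [← Real.norm_eq_abs, hmain]
  exact hfin
end
end

section
/- Interior cone condition for parabolic boxes: let P_R = (R², 1) × {x ∈ ℝ³ : |x|_∞ < 1-R} with R < 1/2, and let D_d denote the set of points of P_R at parabolic distance at least d from its parabolic boundary. Then for every d with D_d nonempty, for all r ∈ [0, 1/2 - d], every x ∈ D_d, and every nonzero vector ν ∈ ℝ³, there exists y ∈ D_d with d(x,y) = r such that |ν · (X(y) - X(x))| ≥ (√2/2)|ν| d(x,y), where X is the spatial projection. -/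
open MeasureTheory Finset Set

noncomputable section

lemma mem_closure_PRset {R : ℝ} (hR0 : 0 ≤ R) (hR : R < 1/2) {z : SpTime} :
    z ∈ closure (PRset R) ↔ R ^ 2 ≤ z.1 ∧ z.1 ≤ 1 ∧ ‖z.2‖ ≤ 1 - R := by
  have h1 : (R:ℝ) ^ 2 < 1 := by nlinarith
  have h2 : (0:ℝ) < 1 - R := by linarith
  have hball : {x : Fin 3 → ℝ | ‖x‖ < 1 - R} = Metric.ball 0 (1-R) := by
    ext x; simp [Metric.mem_ball, dist_zero_right]
  rw [PRset, hball, closure_prod_eq, closure_Ioo (ne_of_lt h1), closure_ball (0 : Fin 3 → ℝ) (ne_of_gt h2)]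
  simp [Set.mem_prod, Set.mem_Icc, Metric.mem_closedBall, dist_zero_right, and_assoc]

lemma sqrt_half_sq_lt {r : ℝ} (hr : 0 < r) : Real.sqrt (r ^ 2 / 2) < r := by
  have := Real.sqrt_lt' hr (x := r ^ 2 / 2)
  rw [this]; nlinarith

lemma bottom_mem_pBoundary {R : ℝ} (hR0 : 0 ≤ R) (hR : R < 1/2) {ξ : Fin 3 → ℝ}
    (hξ : ‖ξ‖ ≤ 1 - R) : ((R ^ 2, ξ) : SpTime) ∈ pBoundary (PRset R) := by
  refine ⟨?_, ?_⟩
  · rw [mem_closure_PRset hR0 hR]; exact ⟨le_refl _, by show R ^ 2 ≤ 1; nlinarith, hξ⟩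
  · intro r hr hsub
    have hv : ((R ^ 2 - r ^ 2/2, ξ) : SpTime) ∈ pballB (R ^ 2, ξ) r := by
      refine ⟨?_, by simp; nlinarith⟩
      unfold pd
      simp only
      have he : |R ^ 2 - (R ^ 2 - r ^ 2/2)| = r ^ 2/2 := by
        rw [abs_of_nonneg (by nlinarith)]; ring
      rw [he, sub_self, norm_zero]
      exact max_lt (sqrt_half_sq_lt hr) hr
    have := hsub hv
    rw [mem_closure_PRset hR0 hR] at this
    have h1 := this.1
    simp only at h1
    nlinarith

lemma pBoundary_classify {R : ℝ} (hR0 : 0 ≤ R) (hR : R < 1/2) {w : SpTime}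
    (hw : w ∈ pBoundary (PRset R)) : w.1 = R ^ 2 ∨ ‖w.2‖ = 1 - R := by
  obtain ⟨hc, hb⟩ := hw
  rw [mem_closure_PRset hR0 hR] at hc
  by_contra h
  push_neg at h
  have h1 : R ^ 2 < w.1 := lt_of_le_of_ne hc.1 (Ne.symm h.1)
  have h2 : ‖w.2‖ < 1 - R := lt_of_le_of_ne hc.2.2 h.2
  set r := min (Real.sqrt (w.1 - R ^ 2)) (1 - R - ‖w.2‖) with hrdef
  have hr : 0 < r := lt_min (Real.sqrt_pos.mpr (by linarith)) (by linarith)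
  apply hb r hr
  intro v hv
  obtain ⟨hpd, ht⟩ := hv
  rw [mem_closure_PRset hR0 hR]
  have hT : Real.sqrt |w.1 - v.1| < r := lt_of_le_of_lt (le_max_left _ _) hpd
  have hX : ‖w.2 - v.2‖ < r := lt_of_le_of_lt (le_max_right _ _) hpd
  have hr2 : r ^ 2 ≤ w.1 - R ^ 2 := by
    have h3 : r ≤ Real.sqrt (w.1 - R ^ 2) := min_le_left _ _
    nlinarith [Real.sq_sqrt (le_of_lt (by linarith : (0:ℝ) < w.1 - R ^ 2)),
      Real.sqrt_nonneg (w.1 - R ^ 2)]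
  have hT2 : |w.1 - v.1| < w.1 - R ^ 2 := by
    have := (Real.sqrt_lt' hr).mp hT
    linarith
  have habs : w.1 - v.1 ≤ |w.1 - v.1| := le_abs_self _
  refine ⟨by linarith, by linarith, ?_⟩
  have : ‖v.2‖ ≤ ‖w.2‖ + ‖w.2 - v.2‖ := by
    calc ‖v.2‖ = ‖w.2 - (w.2 - v.2)‖ := by ring_nf
    _ ≤ ‖w.2‖ + ‖w.2 - v.2‖ := norm_sub_le _ _
  have hrr : r ≤ 1 - R - ‖w.2‖ := min_le_right _ _
  linarith

lemma lateral_mem_pBoundary {R : ℝ} (hR0 : 0 ≤ R) (hR : R < 1/2) {t : ℝ}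
    (ht : R ^ 2 ≤ t) (ht1 : t ≤ 1) {ξ : Fin 3 → ℝ} (hξ : ‖ξ‖ ≤ 1 - R)
    (k : Fin 3) (hk : |ξ k| = 1 - R) : ((t, ξ) : SpTime) ∈ pBoundary (PRset R) := by
  refine ⟨by rw [mem_closure_PRset hR0 hR]; exact ⟨ht, ht1, hξ⟩, ?_⟩
  intro r hr hsub
  set s : ℝ := if 0 ≤ ξ k then 1 else -1 with hs
  have hsξ : s * ξ k = |ξ k| := by
    rcases le_or_gt 0 (ξ k) with h | h
    · rw [hs, if_pos h, abs_of_nonneg h, one_mul]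
    · rw [hs, if_neg (not_le.mpr h), abs_of_neg h]; ring
  have hss : s * s = 1 := by rcases le_or_gt 0 (ξ k) with h | h <;> simp [hs, h, not_le.mpr]
  set v : SpTime := (t - r ^ 2/2, Function.update ξ k (ξ k + s * (r/2))) with hv
  have hvmem : v ∈ pballB (t, ξ) r := by
    refine ⟨?_, by simp [hv]; nlinarith⟩
    unfold pd
    have he : |t - v.1| = r ^ 2 / 2 := by
      simp only [hv]; rw [abs_of_nonneg (by nlinarith)]; ring
    have hsp : ξ - v.2 = Pi.single k (-(s * (r/2))) := by
      funext i
      rcases eq_or_ne i k with rfl | hik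
      · simp [hv, Function.update_self]
      · simp [hv, Function.update_of_ne hik, Pi.single_eq_of_ne hik]
    have hnorm : ‖(t, ξ).2 - v.2‖ < r := by
      simp only [hsp]
      rw [Pi.norm_single, Real.norm_eq_abs, abs_neg, abs_mul]
      have : |s| = 1 := by rcases le_or_gt 0 (ξ k) with h | h <;> simp [hs, h, not_le.mpr]
      rw [this, one_mul, abs_of_nonneg (by linarith : (0:ℝ) ≤ r/2)]
      linarith
    refine max_lt ?_ hnorm
    show Real.sqrt |(t, ξ).1 - v.1| < r
    simp only
    rw [he]
    exact sqrt_half_sq_lt hr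
  have := hsub hvmem
  rw [mem_closure_PRset hR0 hR] at this
  have h2 : ‖v.2‖ ≤ 1 - R := this.2.2
  have h3 : |v.2 k| ≤ ‖v.2‖ := by
    have := norm_le_pi_norm v.2 k
    simpa [Real.norm_eq_abs] using this
  have h4 : |v.2 k| = 1 - R + r/2 := by
    have hvk : v.2 k = ξ k + s * (r/2) := by simp [hv]
    rw [hvk]
    rcases le_or_gt 0 (ξ k) with h | h
    · have hξk' : ξ k = 1 - R := by rw [← abs_of_nonneg h, hk]
      rw [hs, if_pos h, one_mul, hξk', abs_of_nonneg (by linarith)]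
    · have hξk' : ξ k = -(1 - R) := by
        have := abs_of_neg h; rw [hk] at this; linarith
      rw [hs, if_neg (not_le.mpr h), hξk',
        show -(1 - R) + -1 * (r/2) = -((1 - R) + r/2) by ring,
        abs_neg, abs_of_nonneg (by linarith)]
  linarith

/-- spatial interior cone condition for the shrunk parabolic boxes
`(P_R)_d` with parameters `r_d = 1/2 - d` and `λ = √2/2`, uniformly in `R < 1/2`. -/
theorem stmt_10 (R d : ℝ) (hR0 : 0 ≤ R) (hR : R < 1/2) (hd : 0 ≤ d)
    (hne : (shrink (PRset R) d).Nonempty) :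
    ∀ r ∈ Set.Icc (0:ℝ) (1/2 - d), ∀ x ∈ shrink (PRset R) d,
      ∀ ν : Fin 3 → ℝ, ν ≠ 0 →
        ∃ y ∈ shrink (PRset R) d, pd x y = r ∧
          Real.sqrt 2 / 2 * ‖ν‖ * pd x y ≤ |∑ i, ν i * (y.2 i - x.2 i)| := by
  intro r hr x hx ν hν
  obtain ⟨hr0, hr1⟩ := hr
  obtain ⟨hxP, hxd⟩ := hx
  have hxP' := hxP
  rw [PRset, Set.mem_prod] at hxP'
  obtain ⟨⟨hx1, hx1'⟩, hx2⟩ := hxP'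
  have hx2 : ‖x.2‖ < 1 - R := hx2
  -- bound from the bottom boundary
  have hbot : d ≤ Real.sqrt (x.1 - R ^ 2) := by
    have hb := hxd (R ^ 2, x.2) (bottom_mem_pBoundary hR0 hR hx2.le)
    have : pd x (R ^ 2, x.2) = Real.sqrt (x.1 - R ^ 2) := by
      unfold pd
      simp only [sub_self, norm_zero]
      rw [abs_of_nonneg (by linarith), max_eq_left (Real.sqrt_nonneg _)]
    rwa [this] at hb
  -- bound from the lateral boundary
  obtain ⟨k, -, hkmax⟩ := Finset.exists_max_image Finset.univ (fun i => |x.2 i|)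
    ⟨0, Finset.mem_univ 0⟩
  have hknorm : ‖x.2‖ = |x.2 k| := by
    refine le_antisymm ((pi_norm_le_iff_of_nonneg (abs_nonneg _)).mpr fun i => ?_) ?_
    · simpa [Real.norm_eq_abs] using hkmax i (Finset.mem_univ i)
    · simpa [Real.norm_eq_abs] using norm_le_pi_norm x.2 k
  set sk : ℝ := if 0 ≤ x.2 k then 1 else -1 with hsk
  set ξ : Fin 3 → ℝ := Function.update x.2 k (sk * (1 - R)) with hξ
  have hskξ : sk * x.2 k = |x.2 k| := by
    rcases le_or_gt 0 (x.2 k) with h | h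
    · rw [hsk, if_pos h, abs_of_nonneg h, one_mul]
    · rw [hsk, if_neg (not_le.mpr h), abs_of_neg h]; ring
  have hsk1 : |sk| = 1 := by rcases le_or_gt 0 (x.2 k) with h | h <;> simp [hsk, h, not_le.mpr]
  have hξk : |ξ k| = 1 - R := by
    rw [hξ, Function.update_self, abs_mul, hsk1, one_mul, abs_of_nonneg (by linarith)]
  have hξnorm : ‖ξ‖ ≤ 1 - R := by
    refine (pi_norm_le_iff_of_nonneg (by linarith)).mpr fun i => ?_
    rcases eq_or_ne i k with rfl | hik
    · rw [Real.norm_eq_abs, hξk]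
    · rw [hξ, Function.update_of_ne hik, Real.norm_eq_abs]
      have := hkmax i (Finset.mem_univ i)
      rw [← hknorm] at this
      linarith
  have hlat : d ≤ 1 - R - ‖x.2‖ := by
    have hb := hxd (x.1, ξ) (lateral_mem_pBoundary hR0 hR hx1.le hx1'.le hξnorm k hξk)
    have hd1 : x.2 - ξ = Pi.single k (x.2 k - sk * (1 - R)) := by
      funext i
      rcases eq_or_ne i k with rfl | hik
      · simp [hξ, Function.update_self]
      · simp [hξ, Function.update_of_ne hik, Pi.single_eq_of_ne hik]
    have hpd : pd x (x.1, ξ) = 1 - R - ‖x.2‖ := by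
      unfold pd
      simp only [sub_self, abs_zero, Real.sqrt_zero]
      rw [hd1, Pi.norm_single, Real.norm_eq_abs]
      have h5 : |x.2 k - sk * (1 - R)| = |sk * x.2 k - (1 - R)| := by
        rcases le_or_gt 0 (x.2 k) with h | h
        · rw [hsk, if_pos h]; norm_num
        · rw [hsk, if_neg (not_le.mpr h),
            show x.2 k - (-1) * (1 - R) = -((-1) * x.2 k - (1 - R)) by ring, abs_neg]
      rw [h5, hskξ, ← hknorm, abs_of_nonpos (by linarith), max_eq_right (by linarith)]
      ring
    rwa [hpd] at hb
  -- construct y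
  obtain ⟨j, -, hjmax⟩ := Finset.exists_max_image Finset.univ (fun i => |ν i|)
    ⟨0, Finset.mem_univ 0⟩
  have hjnorm : ‖ν‖ = |ν j| := by
    refine le_antisymm ((pi_norm_le_iff_of_nonneg (abs_nonneg _)).mpr fun i => ?_) ?_
    · simpa [Real.norm_eq_abs] using hjmax i (Finset.mem_univ i)
    · simpa [Real.norm_eq_abs] using norm_le_pi_norm ν j
  set s : ℝ := if 0 ≤ x.2 j then -1 else 1 with hs
  have hs1 : |s| = 1 := by rcases le_or_gt 0 (x.2 j) with h | h <;> simp [hs, h, not_le.mpr]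
  have hr12 : r < 1 - R := by linarith
  have hyj : |x.2 j + s * r| ≤ max |x.2 j| r := by
    rcases le_or_gt 0 (x.2 j) with h | h
    · rw [hs, if_pos h]
      rw [abs_le]
      constructor
      · have : -r ≤ x.2 j + -1 * r := by linarith
        have h2 : -(max |x.2 j| r) ≤ -r := by simp [le_max_right]
        linarith
      · have : x.2 j + -1 * r ≤ |x.2 j| := by
          have := le_abs_self (x.2 j); linarith
        exact le_trans this (le_max_left _ _)
    · rw [hs, if_neg (not_le.mpr h)]
      rw [abs_le]
      constructor
      · have : -|x.2 j| ≤ x.2 j := neg_abs_le _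
        have h2 : -(max |x.2 j| r) ≤ -|x.2 j| := by simp [le_max_left]
        linarith
      · have : x.2 j + 1 * r ≤ r := by linarith
        exact le_trans this (le_max_right _ _)
  set y : SpTime := (x.1, Function.update x.2 j (x.2 j + s * r)) with hy
  have hynorm : ‖y.2‖ ≤ max ‖x.2‖ r := by
    refine (pi_norm_le_iff_of_nonneg (le_trans (norm_nonneg _) (le_max_left _ _))).mpr fun i => ?_
    rcases eq_or_ne i j with rfl | hij
    · rw [hy]
      simp only [Function.update_self, Real.norm_eq_abs]
      refine le_trans hyj (max_le_max ?_ le_rfl)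
      simpa [Real.norm_eq_abs] using norm_le_pi_norm x.2 i
    · rw [hy]
      simp only [Function.update_of_ne hij]
      exact le_trans (norm_le_pi_norm x.2 i) (le_max_left _ _)
  have hdiff : x.2 - y.2 = Pi.single j (-(s * r)) := by
    funext i
    rcases eq_or_ne i j with rfl | hij
    · simp [hy, Function.update_self]
    · simp [hy, Function.update_of_ne hij, Pi.single_eq_of_ne hij]
  have hpdxy : pd x y = r := by
    unfold pd
    simp only [hy, sub_self, abs_zero, Real.sqrt_zero]
    rw [show x.2 - (x.1, Function.update x.2 j (x.2 j + s * r)).2 = Pi.single j (-(s * r)) from hdiff]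
    rw [Pi.norm_single, Real.norm_eq_abs, abs_neg, abs_mul, hs1, one_mul,
      abs_of_nonneg hr0, max_eq_right hr0]
  have hmaxle : max ‖x.2‖ r ≤ 1 - R - d := by
    refine max_le (by linarith) (by linarith)
  refine ⟨y, ⟨?_, ?_⟩, hpdxy, ?_⟩
  · rw [PRset, Set.mem_prod]
    refine ⟨⟨hx1, hx1'⟩, ?_⟩
    show ‖y.2‖ < 1 - R
    exact lt_of_le_of_lt hynorm (max_lt hx2 hr12)
  · intro w hw
    rcases pBoundary_classify hR0 hR hw with hcase | hcase
    · refine le_trans ?_ (le_max_left _ _)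
      have : |y.1 - w.1| = x.1 - R ^ 2 := by
        rw [hy, hcase, abs_of_nonneg (by linarith)]
      rw [show Real.sqrt |y.1 - w.1| = Real.sqrt (x.1 - R ^ 2) by rw [this]]
      exact hbot
    · refine le_trans ?_ (le_max_right _ _)
      have h6 : ‖w.2‖ - ‖y.2‖ ≤ ‖y.2 - w.2‖ := by
        have := abs_norm_sub_norm_le w.2 y.2
        have h7 := le_abs_self (‖w.2‖ - ‖y.2‖)
        rw [norm_sub_rev]
        linarith
      have h8 : ‖y.2‖ ≤ 1 - R - d := le_trans hynorm hmaxle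
      rw [hcase] at h6
      linarith
  · rw [hpdxy]
    have hsum : ∑ i, ν i * (y.2 i - x.2 i) = ν j * (s * r) := by
      rw [Finset.sum_eq_single j]
      · rw [hy]; simp [Function.update_self]
      · intro i _ hij
        rw [hy]; simp [Function.update_of_ne hij]
      · intro h; exact absurd (Finset.mem_univ j) h
    rw [hsum, abs_mul, abs_mul, hs1, one_mul, abs_of_nonneg hr0]
    have hsqrt2 : Real.sqrt 2 ≤ 2 := by
      nlinarith [Real.sq_sqrt (by norm_num : (0:ℝ) ≤ 2), Real.sqrt_nonneg 2]
    have hν0 : 0 ≤ |ν j| := abs_nonneg _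
    rw [hjnorm]
    nlinarith [mul_nonneg hν0 hr0]
end
end

section
/- Gradient bound from two-variable Hölder control: let D be a bounded domain in ℝ×ℝ³, 1 < κ < 2, U : D×D → ℝ with U(x,x)=0, and suppose [U]_{κ,D_d} < ∞ where the seminorm allows subtracting an affine correction ν(x)·(X(y)-X(x)) at each base point, with ν a near-optimal choice. Assume D_d satisfies the spatial interior cone condition with parameters r_d > 0 and λ ∈ (0,1). Then for all r ∈ (0, r_d]: λ‖ν‖_{D_d} ≤ [U]_{κ,D_d} r^{κ-1} + ‖U‖_{D_d,r} r^{-1}. -/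
open MeasureTheory Finset Set

noncomputable section

/-- gradient bound `λ‖ν‖ ≤ [U]_κ r^{κ-1} + ‖U‖_{D,r} r⁻¹` from the
two-variable Hölder control and the interior cone condition. -/
theorem stmt_11 (E : Set SpTime) (U : SpTime → SpTime → ℝ) (ν : SpTime → Fin 3 → ℝ)
    (κ Uκ Ur rd lam r : ℝ)
    (hκ : 1 < κ) (hκ' : κ < 2)
    (hdiag : ∀ x ∈ E, U x x = 0)
    (hν : ∀ x ∈ E, ∀ y ∈ E,
      |U x y - ∑ i, ν x i * (y.2 i - x.2 i)| ≤ Uκ * pd x y ^ κ)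
    (hUr : ∀ x ∈ E, ∀ y ∈ E, pd x y ≤ r → |U x y| ≤ Ur)
    (hcone : ∀ x ∈ E, ∀ s ∈ Set.Icc (0:ℝ) rd, ∀ w : Fin 3 → ℝ, w ≠ 0 →
      ∃ y ∈ E, pd x y = s ∧ lam * ‖w‖ * pd x y ≤ |∑ i, w i * (y.2 i - x.2 i)|)
    (hlam : lam ∈ Set.Ioo (0:ℝ) 1) (hrd : 0 < rd) (hr : r ∈ Set.Ioc (0:ℝ) rd) :
    ∀ x ∈ E, lam * ‖ν x‖ ≤ Uκ * r ^ (κ - 1) + Ur * r⁻¹ := by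
  intro x hx
  have hr0 : (0:ℝ) < r := hr.1
  have hrpow : (0:ℝ) < r ^ κ := Real.rpow_pos_of_pos hr0 κ
  have hUr0 : 0 ≤ Ur := by
    have h := hUr x hx x hx (by simp [pd, hr0.le])
    rw [hdiag x hx] at h; simpa using h
  -- Uκ ≥ 0
  have hUκ0 : 0 ≤ Uκ := by
    obtain ⟨y, hy, hpd, -⟩ := hcone x hx r ⟨hr0.le, hr.2⟩ (fun _ => 1)
      (by intro h; simpa using congrFun h 0)
    have h := hν x hx y hy
    rw [hpd] at h
    have h0 : 0 ≤ Uκ * r ^ κ := le_trans (abs_nonneg _) h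
    exact le_of_mul_le_mul_right (by linarith) hrpow
  have hk : r ^ κ = r ^ (κ - 1) * r := by
    rw [Real.rpow_sub_one hr0.ne']
    field_simp
  rcases eq_or_ne (ν x) 0 with h0 | h0
  · rw [h0]
    simp only [norm_zero, mul_zero]
    have h1 : 0 ≤ Uκ * r ^ (κ - 1) :=
      mul_nonneg hUκ0 (Real.rpow_pos_of_pos hr0 _).le
    have h2 : 0 ≤ Ur * r⁻¹ := mul_nonneg hUr0 (inv_pos.mpr hr0).le
    linarith
  · obtain ⟨y, hy, hpd, hco⟩ := hcone x hx r ⟨hr0.le, hr.2⟩ (ν x) h0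
    have h1 := hν x hx y hy
    have h2 := hUr x hx y hy (le_of_eq hpd)
    rw [hpd] at hco h1
    have htri : |∑ i, ν x i * (y.2 i - x.2 i)| ≤ Ur + Uκ * r ^ κ := by
      have h3 : |∑ i, ν x i * (y.2 i - x.2 i)| - |U x y| ≤
          |U x y - ∑ i, ν x i * (y.2 i - x.2 i)| := by
        rw [abs_sub_comm]; exact abs_sub_abs_le_abs_sub _ _
      linarith
    have hmain : lam * ‖ν x‖ * r ≤ Ur + Uκ * (r ^ (κ - 1) * r) := by
      rw [← hk]; linarith
    calc lam * ‖ν x‖ = lam * ‖ν x‖ * r / r := by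
          rw [mul_div_assoc, div_self hr0.ne', mul_one]
      _ ≤ (Ur + Uκ * (r ^ (κ - 1) * r)) / r := by
          apply div_le_div_of_nonneg_right hmain hr0.le |>.trans_eq rfl
      _ = Uκ * r ^ (κ - 1) + Ur * r⁻¹ := by field_simp; ring
end
end
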